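/- Every connected threshold graph G with minimum degree at least 3 satisfies rx₃(G) ≤ 5. -/

import Mathlib

open SimpleGraph

/-- `c` is a `k`-rainbow coloring of `G`: every set of `k` vertices is contained in some
subtree of `G` whose edges receive pairwise distinct colors. -/
def SimpleGraph.IsKRainbowColoring {V : Type*} (G : SimpleGraph V) {t : ℕ}
    (c : Sym2 V → Fin t) (k : ℕ) : Prop :=
  ∀ S : Finset V, S.card = k →
    ∃ T : G.Subgraph, T.coe.IsTree ∧ ↑S ⊆ T.verts ∧ Set.InjOn c T.edgeSet

/-- The `k`-rainbow index of `G`: the least number of colors in a `k`-rainbow coloring. -/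
noncomputable def SimpleGraph.rx {V : Type*} (G : SimpleGraph V) (k : ℕ) : ℕ :=
  sInf {t | ∃ c : Sym2 V → Fin t, G.IsKRainbowColoring c k}


lemma walk_closed {V : Type*} {G : SimpleGraph V} {s : Set V}
    (h : ∀ p q, G.Adj p q → (p ∈ s ↔ q ∈ s)) :
    ∀ {u v : V}, G.Walk u v → u ∈ s → v ∈ s := by
  intro u v p
  induction p with
  | nil => exact id
  | cons h' _ ih => exact fun hu => ih ((h _ _ h').mp hu)

lemma unreach {V : Type*} {G : SimpleGraph V} {s : Set V} {u v : V}
    (h : ∀ p q, G.Adj p q → (p ∈ s ↔ q ∈ s)) (hu : u ∈ s) (hv : v ∉ s) :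
    ¬ G.Reachable u v :=
  fun hr => hr.elim fun p => hv (walk_closed h p hu)

lemma unreach_singleton {V : Type*} {G : SimpleGraph V} {x a : V} (hxa : x ≠ a)
    (h : ∀ p, G.Adj x p → p = a) : ¬(G \ fromEdgeSet {s(x,a)}).Reachable x a := by
  have hx : ∀ r, ¬ (G \ fromEdgeSet {s(x,a)}).Adj x r := by
    intro r hr
    rw [SimpleGraph.sdiff_adj, fromEdgeSet_adj] at hr
    obtain ⟨hG, hne⟩ := hr
    exact hne ⟨by rw [Set.mem_singleton_iff, h r hG], hG.ne⟩
  apply unreach (s := {v | v = x}) _ rfl (Ne.symm hxa)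
  intro p q hpq
  constructor
  · rintro rfl; exact absurd hpq (hx q)
  · rintro rfl; exact absurd hpq.symm (hx p)

lemma spider {V : Type*} {G : SimpleGraph V} {a b c x y z : V}
    (hab : G.Adj a b) (hac : G.Adj a c) (hbc : b ≠ c)
    (hxa : x ≠ a ∧ x ≠ b ∧ x ≠ c → G.Adj x a)
    (hyb : y ≠ a ∧ y ≠ b ∧ y ≠ c → G.Adj y b)
    (hzc : z ≠ a ∧ z ≠ b ∧ z ≠ c → G.Adj z c)
    (hxy : x ≠ y) (hxz : x ≠ z) (hyz : y ≠ z) :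
    ∃ T : G.Subgraph, T.coe.IsTree ∧ ({x, y, z} : Set V) ⊆ T.verts ∧
      T.edgeSet ⊆ {e | e = s(a,b) ∨ e = s(a,c)
        ∨ (e = s(x,a) ∧ x ≠ a ∧ x ≠ b ∧ x ≠ c)
        ∨ (e = s(y,b) ∧ y ≠ a ∧ y ≠ b ∧ y ≠ c)
        ∨ (e = s(z,c) ∧ z ≠ a ∧ z ≠ b ∧ z ≠ c)} := by
  classical
  set E : Set (Sym2 V) := {e | e = s(a,b) ∨ e = s(a,c)
        ∨ (e = s(x,a) ∧ x ≠ a ∧ x ≠ b ∧ x ≠ c)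
        ∨ (e = s(y,b) ∧ y ≠ a ∧ y ≠ b ∧ y ≠ c)
        ∨ (e = s(z,c) ∧ z ≠ a ∧ z ≠ b ∧ z ≠ c)} with hE
  have adjG : ∀ u v : V, s(u,v) ∈ E → G.Adj u v := by
    intro u v h
    rcases h with h|h|⟨h,hP⟩|⟨h,hP⟩|⟨h,hP⟩ <;> rw [Sym2.eq_iff] at h <;>
      rcases h with ⟨rfl,rfl⟩|⟨rfl,rfl⟩
    · exact hab
    · exact hab.symm
    · exact hac
    · exact hac.symm
    · exact hxa hP
    · exact (hxa hP).symm
    · exact hyb hP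
    · exact (hyb hP).symm
    · exact hzc hP
    · exact (hzc hP).symm
  set T : G.Subgraph :=
    { verts := {a, b, c, x, y, z}
      Adj := fun u v => s(u,v) ∈ E
      adj_sub := fun {u v} h => adjG u v h
      edge_vert := by
        intro u v h
        rcases h with h|h|⟨h,hP⟩|⟨h,hP⟩|⟨h,hP⟩ <;> rw [Sym2.eq_iff] at h <;>
          rcases h with ⟨rfl,-⟩|⟨rfl,-⟩ <;> simp
      symm := by
        refine ⟨fun u v h => ?_⟩
        show s(v,u) ∈ E
        rwa [Sym2.eq_swap] } with hT
  have tab : T.Adj a b := Or.inl rfl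
  have tac : T.Adj a c := Or.inr (Or.inl rfl)
  have txa : (x ≠ a ∧ x ≠ b ∧ x ≠ c) → T.Adj x a := fun h => Or.inr (Or.inr (Or.inl ⟨rfl, h⟩))
  have tyb : (y ≠ a ∧ y ≠ b ∧ y ≠ c) → T.Adj y b := fun h => Or.inr (Or.inr (Or.inr (Or.inl ⟨rfl, h⟩)))
  have tzc : (z ≠ a ∧ z ≠ b ∧ z ≠ c) → T.Adj z c := fun h => Or.inr (Or.inr (Or.inr (Or.inr ⟨rfl, h⟩)))
  have hma : a ∈ T.verts := by simp [hT]
  refine ⟨T, ⟨?_, ?_⟩, by intro v hv; rcases hv with rfl|rfl|rfl <;> simp [hT], ?_⟩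
  · -- connected
    have ra : ∀ (h : a ∈ T.verts), T.coe.Reachable ⟨a, h⟩ ⟨a, hma⟩ := fun h => Reachable.refl _
    have rb : ∀ (h : b ∈ T.verts), T.coe.Reachable ⟨b, h⟩ ⟨a, hma⟩ := fun h => (tab.coe).symm.reachable
    have rc : ∀ (h : c ∈ T.verts), T.coe.Reachable ⟨c, h⟩ ⟨a, hma⟩ := fun h => (tac.coe).symm.reachable
    have fallback : ∀ (v : V), ¬(v ≠ a ∧ v ≠ b ∧ v ≠ c) → ∀ (h : v ∈ T.verts), v = a ∨ v = b ∨ v = c := by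
      intro v hv h; by_contra hcon; push_neg at hcon; exact hv ⟨hcon.1, hcon.2.1, hcon.2.2⟩
    have rx : ∀ (h : x ∈ T.verts), T.coe.Reachable ⟨x, h⟩ ⟨a, hma⟩ := by
      intro h
      by_cases hP : x ≠ a ∧ x ≠ b ∧ x ≠ c
      · exact ((txa hP).coe).reachable
      · rcases fallback x hP h with rfl|rfl|rfl
        exacts [ra h, rb h, rc h]
    have ry : ∀ (h : y ∈ T.verts), T.coe.Reachable ⟨y, h⟩ ⟨a, hma⟩ := by
      intro h
      by_cases hP : y ≠ a ∧ y ≠ b ∧ y ≠ c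
      · exact ((tyb hP).coe).reachable.trans (rb _)
      · rcases fallback y hP h with rfl|rfl|rfl
        exacts [ra h, rb h, rc h]
    have rz : ∀ (h : z ∈ T.verts), T.coe.Reachable ⟨z, h⟩ ⟨a, hma⟩ := by
      intro h
      by_cases hP : z ≠ a ∧ z ≠ b ∧ z ≠ c
      · exact ((tzc hP).coe).reachable.trans (rc _)
      · rcases fallback z hP h with rfl|rfl|rfl
        exacts [ra h, rb h, rc h]
    have key : ∀ (v : V) (h : v ∈ T.verts), T.coe.Reachable ⟨v, h⟩ ⟨a, hma⟩ := by
      intro v h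
      have h' : v = a ∨ v = b ∨ v = c ∨ v = x ∨ v = y ∨ v = z := by
        simpa [hT] using h
      rcases h' with rfl|rfl|rfl|rfl|rfl|rfl
      exacts [ra h, rb h, rc h, rx h, ry h, rz h]
    have hpre : T.coe.Preconnected := fun u v => (key u.1 u.2).trans (key v.1 v.2).symm
    haveI : Nonempty T.verts := ⟨⟨a, hma⟩⟩
    exact ⟨hpre⟩
  · -- acyclic
    have hyx : y ≠ x := hxy.symm
    have hzx : z ≠ x := hxz.symm
    have hzy : z ≠ y := hyz.symm
    set H : SimpleGraph V := fromEdgeSet E with hH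
    have hHadj : ∀ u v : V, H.Adj u v ↔ s(u,v) ∈ E ∧ u ≠ v := by
      intro u v; rw [hH, fromEdgeSet_adj]
    have hdel : ∀ (e : Sym2 V) (p q : V), (H \ fromEdgeSet {e}).Adj p q →
        s(p,q) ∈ E ∧ p ≠ q ∧ s(p,q) ≠ e := by
      intro e p q hpq
      rw [SimpleGraph.sdiff_adj, fromEdgeSet_adj, fromEdgeSet_adj] at hpq
      obtain ⟨⟨hm, hne⟩, hnd⟩ := hpq
      exact ⟨hm, hne, fun hh => hnd ⟨hh, hne⟩⟩
    -- leaf properties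
    have leaf_x : (x ≠ a ∧ x ≠ b ∧ x ≠ c) → ∀ p, H.Adj x p → p = a := by
      intro hP p hp
      obtain ⟨hP1, hP2, hP3⟩ := hP
      have hm := ((hHadj _ _).mp hp).1
      rcases hm with h|h|⟨h,hP'⟩|⟨h,hP'⟩|⟨h,hP'⟩ <;> rw [Sym2.eq_iff] at h <;>
        rcases h with ⟨h1,h2⟩|⟨h1,h2⟩ <;> first | exact h2 | (exfalso; tauto)
    have leaf_y : (y ≠ a ∧ y ≠ b ∧ y ≠ c) → ∀ p, H.Adj y p → p = b := by
      intro hP p hp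
      obtain ⟨hP1, hP2, hP3⟩ := hP
      have hm := ((hHadj _ _).mp hp).1
      rcases hm with h|h|⟨h,hP'⟩|⟨h,hP'⟩|⟨h,hP'⟩ <;> rw [Sym2.eq_iff] at h <;>
        rcases h with ⟨h1,h2⟩|⟨h1,h2⟩ <;> first | exact h2 | (exfalso; tauto)
    have leaf_z : (z ≠ a ∧ z ≠ b ∧ z ≠ c) → ∀ p, H.Adj z p → p = c := by
      intro hP p hp
      obtain ⟨hP1, hP2, hP3⟩ := hP
      have hm := ((hHadj _ _).mp hp).1
      rcases hm with h|h|⟨h,hP'⟩|⟨h,hP'⟩|⟨h,hP'⟩ <;> rw [Sym2.eq_iff] at h <;>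
        rcases h with ⟨h1,h2⟩|⟨h1,h2⟩ <;> first | exact h2 | (exfalso; tauto)
    -- bridge for ab
    set s1 : Set V := {v | v = b ∨ (v = y ∧ (y ≠ a ∧ y ≠ b ∧ y ≠ c))} with hs1
    have m1_b : b ∈ s1 := Or.inl rfl
    have m1_y : (y ≠ a ∧ y ≠ b ∧ y ≠ c) → y ∈ s1 := fun h => Or.inr ⟨rfl, h⟩
    have n1_a : a ∉ s1 := by rintro (h|⟨h,hP⟩); exacts [hab.ne h, hP.1 h.symm]
    have n1_c : c ∉ s1 := by rintro (h|⟨h,hP⟩); exacts [hbc h.symm, hP.2.2 h.symm]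
    have n1_x : (x ≠ a ∧ x ≠ b ∧ x ≠ c) → x ∉ s1 := by
      intro hP; rintro (h|⟨h,-⟩); exacts [hP.2.1 h, hxy h]
    have n1_z : (z ≠ a ∧ z ≠ b ∧ z ≠ c) → z ∉ s1 := by
      intro hP; rintro (h|⟨h,-⟩); exacts [hP.2.1 h, hzy h]
    have closure1 : ∀ p q, (H \ fromEdgeSet {s(a,b)}).Adj p q → (p ∈ s1 ↔ q ∈ s1) := by
      intro p q hpq
      obtain ⟨hm, hne, hnd⟩ := hdel _ p q hpq
      rcases hm with h|h|⟨h,hP⟩|⟨h,hP⟩|⟨h,hP⟩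
      · exact absurd h hnd
      · rw [Sym2.eq_iff] at h
        rcases h with ⟨rfl,rfl⟩|⟨rfl,rfl⟩ <;> simp [n1_a, n1_c]
      · rw [Sym2.eq_iff] at h
        rcases h with ⟨rfl,rfl⟩|⟨rfl,rfl⟩ <;> simp [n1_a, n1_x hP]
      · rw [Sym2.eq_iff] at h
        rcases h with ⟨rfl,rfl⟩|⟨rfl,rfl⟩ <;> simp [m1_b, m1_y hP]
      · rw [Sym2.eq_iff] at h
        rcases h with ⟨rfl,rfl⟩|⟨rfl,rfl⟩ <;> simp [n1_c, n1_z hP]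
    have key_ab : ¬(H \ fromEdgeSet {s(a,b)}).Reachable a b :=
      fun hr => unreach closure1 m1_b n1_a hr.symm
    -- bridge for ac
    set s2 : Set V := {v | v = c ∨ (v = z ∧ (z ≠ a ∧ z ≠ b ∧ z ≠ c))} with hs2
    have m2_c : c ∈ s2 := Or.inl rfl
    have m2_z : (z ≠ a ∧ z ≠ b ∧ z ≠ c) → z ∈ s2 := fun h => Or.inr ⟨rfl, h⟩
    have n2_a : a ∉ s2 := by rintro (h|⟨h,hP⟩); exacts [hac.ne h, hP.1 h.symm]
    have n2_b : b ∉ s2 := by rintro (h|⟨h,hP⟩); exacts [hbc h, hP.2.1 h.symm]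
    have n2_x : (x ≠ a ∧ x ≠ b ∧ x ≠ c) → x ∉ s2 := by
      intro hP; rintro (h|⟨h,-⟩); exacts [hP.2.2 h, hxz h]
    have n2_y : (y ≠ a ∧ y ≠ b ∧ y ≠ c) → y ∉ s2 := by
      intro hP; rintro (h|⟨h,-⟩); exacts [hP.2.2 h, hyz h]
    have closure2 : ∀ p q, (H \ fromEdgeSet {s(a,c)}).Adj p q → (p ∈ s2 ↔ q ∈ s2) := by
      intro p q hpq
      obtain ⟨hm, hne, hnd⟩ := hdel _ p q hpq
      rcases hm with h|h|⟨h,hP⟩|⟨h,hP⟩|⟨h,hP⟩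
      · rw [Sym2.eq_iff] at h
        rcases h with ⟨rfl,rfl⟩|⟨rfl,rfl⟩ <;> simp [n2_a, n2_b]
      · exact absurd h hnd
      · rw [Sym2.eq_iff] at h
        rcases h with ⟨rfl,rfl⟩|⟨rfl,rfl⟩ <;> simp [n2_a, n2_x hP]
      · rw [Sym2.eq_iff] at h
        rcases h with ⟨rfl,rfl⟩|⟨rfl,rfl⟩ <;> simp [n2_b, n2_y hP]
      · rw [Sym2.eq_iff] at h
        rcases h with ⟨rfl,rfl⟩|⟨rfl,rfl⟩ <;> simp [m2_c, m2_z hP]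
    have key_ac : ¬(H \ fromEdgeSet {s(a,c)}).Reachable a c :=
      fun hr => unreach closure2 m2_c n2_a hr.symm
    have key_xa : (x ≠ a ∧ x ≠ b ∧ x ≠ c) → ¬(H \ fromEdgeSet {s(x,a)}).Reachable x a :=
      fun hP => unreach_singleton hP.1 (leaf_x hP)
    have key_yb : (y ≠ a ∧ y ≠ b ∧ y ≠ c) → ¬(H \ fromEdgeSet {s(y,b)}).Reachable y b :=
      fun hP => unreach_singleton hP.2.1 (leaf_y hP)
    have key_zc : (z ≠ a ∧ z ≠ b ∧ z ≠ c) → ¬(H \ fromEdgeSet {s(z,c)}).Reachable z c :=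
      fun hP => unreach_singleton hP.2.2 (leaf_z hP)
    have hHacyc : H.IsAcyclic := by
      rw [isAcyclic_iff_forall_adj_isBridge]
      intro u v huv
      rw [isBridge_iff]
      have hm : s(u,v) ∈ E := ((hHadj u v).mp huv).1
      rcases hm with h|h|⟨h,hP⟩|⟨h,hP⟩|⟨h,hP⟩ <;> intro hr <;> rw [h] at hr <;>
        rcases Sym2.eq_iff.mp h with ⟨h1,h2⟩|⟨h1,h2⟩ <;> rw [h1, h2] at hr
      · exact key_ab hr
      · exact key_ab hr.symm
      · exact key_ac hr
      · exact key_ac hr.symm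
      · exact key_xa hP hr
      · exact key_xa hP hr.symm
      · exact key_yb hP hr
      · exact key_yb hP hr.symm
      · exact key_zc hP hr
      · exact key_zc hP hr.symm
    have FAdj : ∀ (u v : T.verts), T.coe.Adj u v → H.Adj u v := by
      intro u v h
      rw [hHadj]
      exact ⟨h, (T.adj_sub h).ne⟩
    intro v p hp
    exact hHacyc ((p.map ⟨Subtype.val, fun {u v} h => FAdj u v h⟩).copy rfl rfl)
      (hp.map Subtype.val_injective)
  · -- edge set
    intro e he
    induction e using Sym2.ind with
    | _ u v => exact he

/-- Every connected threshold graph `G` with minimum degree at least 3 satisfies `rx₃(G) ≤ 5`. -/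
theorem stmt11 {V : Type*} [Fintype V] (G : SimpleGraph V) (hG : G.Connected)
    (h4 : 4 ≤ Fintype.card V)
    (hthr : ∃ (w : V → ℝ) (t : ℝ), ∀ u v : V, u ≠ v → (G.Adj u v ↔ t ≤ w u + w v))
    (hδ : ∀ v : V, 3 ≤ (G.neighborSet v).ncard) :
    G.rx 3 ≤ 5 := by
  classical
  obtain ⟨w, t, hw⟩ := hthr
  haveI : Nonempty V := Fintype.card_pos_iff.mp (by omega)
  -- pick the three heaviest vertices
  obtain ⟨a, -, hamax⟩ := Finset.exists_max_image Finset.univ w Finset.univ_nonempty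
  have h1 : ((Finset.univ : Finset V).erase a).Nonempty := by
    rw [← Finset.card_pos, Finset.card_erase_of_mem (Finset.mem_univ a), Finset.card_univ]
    omega
  obtain ⟨b, hbmem, hbmax⟩ := Finset.exists_max_image _ w h1
  have h2 : (((Finset.univ : Finset V).erase a).erase b).Nonempty := by
    rw [← Finset.card_pos, Finset.card_erase_of_mem (Finset.mem_erase.mpr ⟨Finset.ne_of_mem_erase hbmem, Finset.mem_univ b⟩),
      Finset.card_erase_of_mem (Finset.mem_univ a), Finset.card_univ]
    omega
  obtain ⟨c, hcmem, hcmax⟩ := Finset.exists_max_image _ w h2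
  have hba : b ≠ a := Finset.ne_of_mem_erase hbmem
  have hcb : c ≠ b := Finset.ne_of_mem_erase hcmem
  have hca : c ≠ a := Finset.ne_of_mem_erase (Finset.mem_of_mem_erase hcmem)
  -- neighbor existence avoiding a small set
  have key : ∀ (v : V) (A : Set V), A.ncard < 3 → ∃ u, G.Adj v u ∧ u ∉ A := by
    intro v A hA
    by_contra h
    push_neg at h
    have hsub : G.neighborSet v ⊆ A := fun u hu => h u hu
    have := Set.ncard_le_ncard hsub (Set.toFinite A)
    have := hδ v
    omega
  have hadj : ∀ v : V, v ≠ a → G.Adj a v := by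
    intro v hv
    obtain ⟨u, hu, -⟩ := key v ∅ (by simp)
    have h1 : t ≤ w v + w u := (hw v u hu.ne).mp hu
    have h2 : w u ≤ w a := hamax u (Finset.mem_univ u)
    exact (hw a v (Ne.symm hv)).mpr (by linarith)
  have hbadj : ∀ v : V, v ≠ a → v ≠ b → G.Adj b v := by
    intro v hva hvb
    obtain ⟨u, hu, hu'⟩ := key v {a} (by simp)
    have h1 : t ≤ w v + w u := (hw v u hu.ne).mp hu
    have h2 : w u ≤ w b := hbmax u (Finset.mem_erase.mpr ⟨by simpa using hu', Finset.mem_univ u⟩)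
    exact (hw b v (Ne.symm hvb)).mpr (by linarith)
  have hcadj : ∀ v : V, v ≠ a → v ≠ b → v ≠ c → G.Adj c v := by
    intro v hva hvb hvc
    have hc2 : ({a, b} : Set V).ncard < 3 := by
      have := Set.ncard_insert_le a ({b} : Set V)
      simp only [Set.ncard_singleton] at this
      omega
    obtain ⟨u, hu, hu'⟩ := key v {a, b} hc2
    have h1 : t ≤ w v + w u := (hw v u hu.ne).mp hu
    simp only [Set.mem_insert_iff, Set.mem_singleton_iff, not_or] at hu'
    have h2 : w u ≤ w c := hcmax u (by
      exact Finset.mem_erase.mpr ⟨hu'.2, Finset.mem_erase.mpr ⟨hu'.1, Finset.mem_univ u⟩⟩)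
    exact (hw c v (Ne.symm hvc)).mpr (by linarith)
  have hab : G.Adj a b := hadj b hba
  have hac : G.Adj a c := hadj c hca
  have hbc : b ≠ c := hcb.symm
  -- the coloring
  let col : Sym2 V → Fin 5 := fun e =>
    if a ∈ e ∧ b ∈ e then 3 else if a ∈ e ∧ c ∈ e then 4
    else if a ∈ e then 0 else if b ∈ e then 1 else 2
  have hab' : a ≠ b := hba.symm
  have hac' : a ≠ c := hca.symm
  have cab : col s(a,b) = 3 := by simp [col]
  have cac : col s(a,c) = 4 := by simp [col, hba, hbc, Ne.symm hbc]
  have cxa : ∀ x : V, x ≠ a → x ≠ b → x ≠ c → col s(x,a) = 0 := by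
    intro x h1 h2 h3
    simp [col, Ne.symm h2, Ne.symm h3, hba, hca]
  have cyb : ∀ y : V, y ≠ a → y ≠ b → y ≠ c → col s(y,b) = 1 := by
    intro y h1 h2 h3
    simp [col, Ne.symm h1, hab', Ne.symm h2]
  have czc : ∀ z : V, z ≠ a → z ≠ b → z ≠ c → col s(z,c) = 2 := by
    intro z h1 h2 h3
    simp [col, Ne.symm h1, Ne.symm h2, hac', hbc]
  -- 5 is in the defining set
  apply Nat.sInf_le
  refine ⟨col, ?_⟩
  intro S hS
  rw [Finset.card_eq_three] at hS
  obtain ⟨x, y, z, hxy, hxz, hyz, rfl⟩ := hS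
  obtain ⟨T, htree, hverts, hedges⟩ := spider hab hac hbc
    (fun h => (hadj x h.1).symm) (fun h => (hbadj y h.1 h.2.1).symm)
    (fun h => (hcadj z h.1 h.2.1 h.2.2).symm) hxy hxz hyz
  refine ⟨T, htree, by simpa using hverts, ?_⟩
  intro e1 he1 e2 he2 hceq
  rcases hedges he1 with rfl|rfl|⟨rfl,p1,p2,p3⟩|⟨rfl,p1,p2,p3⟩|⟨rfl,p1,p2,p3⟩ <;>
    rcases hedges he2 with rfl|rfl|⟨rfl,q1,q2,q3⟩|⟨rfl,q1,q2,q3⟩|⟨rfl,q1,q2,q3⟩ <;>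
    first
      | rfl
      | (exfalso; simp_all only [cab, cac, cxa, cyb, czc, ne_eq, not_false_eq_true, Fin.reduceEq])
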